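/- In ℤ/(2p) with p an odd prime, the element p is adjacent in the nil clean divisor graph to every other nonzero element: for every nonzero y ≠ p in ℤ/(2p), the product p·y is nil clean. Hence deg(p) = 2p − 2. -/
import Mathlib


def IsNilCleanElem {R : Type*} [CommRing R] (x : R) : Prop :=
  ∃ e n : R, IsIdempotentElem e ∧ IsNilpotent n ∧ x = e + n

def NCVertex {R : Type*} [CommRing R] (x : R) : Prop :=
  x ≠ 0 ∧ ∃ y : R, y ≠ 0 ∧ y ≠ x ∧ IsNilCleanElem (x * y)

def NCAdj {R : Type*} [CommRing R] (x y : R) : Prop :=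
  x ≠ y ∧ NCVertex x ∧ NCVertex y ∧ IsNilCleanElem (x * y)

lemma two_dvd_aux (p n : ℤ) (hp : Odd p) : 2 ∣ n * (p * n - 1) := by
  rcases Int.even_or_odd n with h | h
  · exact dvd_mul_of_dvd_left h.two_dvd _
  · have : Even (p * n - 1) := (hp.mul h).sub_odd odd_one
    exact dvd_mul_of_dvd_right this.two_dvd _

lemma pmul_idem (p : ℕ) (hpos : 0 < p) (hodd : Odd p) (y : ZMod (2 * p)) :
    IsIdempotentElem ((p : ZMod (2 * p)) * y) := by
  haveI : NeZero (2 * p) := ⟨by omega⟩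
  have hy : ((y.val : ℕ) : ZMod (2 * p)) = y := ZMod.natCast_rightInverse y
  set n := y.val with hn
  unfold IsIdempotentElem
  rw [← hy]
  rw [show ((p : ZMod (2*p)) * n * ((p : ZMod (2*p)) * n)) = ((p*n*(p*n) : ℕ) : ZMod (2*p)) by push_cast; ring,
      show ((p : ZMod (2*p)) * n) = ((p*n : ℕ) : ZMod (2*p)) by push_cast; ring]
  rw [ZMod.natCast_eq_natCast_iff]
  rw [Nat.modEq_iff_dvd]
  obtain ⟨k, hk⟩ := two_dvd_aux (p : ℤ) (n : ℤ) (by exact_mod_cast hodd)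
  refine ⟨-k, ?_⟩
  push_cast
  linear_combination (-(p : ℤ)) * hk

theorem stmt12 (p : ℕ) (hp : p.Prime) (hodd : Odd p) :
    (∀ y : ZMod (2 * p), y ≠ 0 → y ≠ (p : ZMod (2 * p)) →
      IsNilCleanElem ((p : ZMod (2 * p)) * y)) ∧
    Set.ncard {y : ZMod (2 * p) | y ≠ 0 ∧ y ≠ (p : ZMod (2 * p)) ∧
      IsNilCleanElem ((p : ZMod (2 * p)) * y)} = 2 * p - 2 := by
  haveI : NeZero (2 * p) := ⟨by have := hp.pos; omega⟩
  have hnc : ∀ y : ZMod (2 * p), IsNilCleanElem ((p : ZMod (2 * p)) * y) := fun y =>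
    ⟨(p : ZMod (2 * p)) * y, 0, pmul_idem p hp.pos hodd y, ⟨1, by simp⟩, by ring⟩
  refine ⟨fun y _ _ => hnc y, ?_⟩
  have hpne : (p : ZMod (2 * p)) ≠ 0 := by
    rw [Ne, ZMod.natCast_eq_zero_iff]
    intro h
    have h1 := Nat.le_of_dvd hp.pos h
    have h2 := hp.two_le
    omega
  have hset : {y : ZMod (2 * p) | y ≠ 0 ∧ y ≠ (p : ZMod (2 * p)) ∧
      IsNilCleanElem ((p : ZMod (2 * p)) * y)} = ({0, (p : ZMod (2 * p))} : Set _)ᶜ := by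
    ext y
    simp only [Set.mem_setOf_eq, Set.mem_compl_iff, Set.mem_insert_iff, Set.mem_singleton_iff]
    constructor
    · rintro ⟨h1, h2, _⟩; tauto
    · intro h; exact ⟨fun h1 => h (Or.inl h1), fun h2 => h (Or.inr h2), hnc y⟩
  rw [hset]
  have h2 : ({0, (p : ZMod (2 * p))} : Set _).ncard = 2 := Set.ncard_pair (Ne.symm hpne)
  have := Set.ncard_add_ncard_compl ({0, (p : ZMod (2 * p))} : Set (ZMod (2 * p)))
  rw [h2, Nat.card_zmod] at this
  omega
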